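/- arXiv:0911.1796 — 2 statements merged into one kernel-verified Lean document; each statement's English description precedes it below -/
import Mathlib

section
/- For every unit vector ψ in the n-partite Hilbert space H, the fidelity of separability of the pure state |ψ⟩⟨ψ| equals the squared maximal overlap with product states: F_sep(|ψ⟩⟨ψ|) = sup over product unit vectors φ of |⟨φ,ψ⟩|² = Λ_max(ψ)². In particular, in the maximization defining F_sep for a pure state one may restrict to pure product states. -/
open scoped BigOperators ComplexOrder

noncomputable section

/-- Inner product `⟨u,v⟩ = ∑ x, conj (u x) * v x` on functions `ι → ℂ`. -/
def inn {ι : Type*} [Fintype ι] (u v : ι → ℂ) : ℂ := ∑ x, star (u x) * v x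

/-- Unit vector. -/
def IsUnitVec {ι : Type*} [Fintype ι] (v : ι → ℂ) : Prop := inn v v = 1

/-- Rank-one projector `|v⟩⟨v|`. -/
def proj {ι : Type*} [Fintype ι] (v : ι → ℂ) : Matrix ι ι ℂ :=
  fun x y => v x * star (v y)

/-- Positive semidefinite square root (zero on non-PSD matrices). -/
def psqrt {ι : Type*} [Fintype ι] [DecidableEq ι] (A : Matrix ι ι ℂ) : Matrix ι ι ℂ :=
  open scoped Classical in if h : A.PosSemidef then
    (h.1.eigenvectorUnitary : Matrix ι ι ℂ) *
      Matrix.diagonal ((↑) ∘ (Real.sqrt ·) ∘ h.1.eigenvalues) *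
      (star h.1.eigenvectorUnitary : Matrix ι ι ℂ) else 0

/-- Fidelity `F(ρ,σ) = (Tr √(√ρ σ √ρ))²`. -/
def fid {ι : Type*} [Fintype ι] [DecidableEq ι] (ρ σ : Matrix ι ι ℂ) : ℝ :=
  ((psqrt (psqrt ρ * σ * psqrt ρ)).trace.re) ^ 2

/-- Product vector on the `n`-partite Hilbert space. -/
def IsProdVec {n : ℕ} {d : Fin n → ℕ} (v : (∀ j, Fin (d j)) → ℂ) : Prop :=
  ∃ f : ∀ j, Fin (d j) → ℂ, ∀ x, v x = ∏ j, f j (x j)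

/-- Separable state: finite convex combination of projectors onto product unit vectors. -/
def IsSepState {n : ℕ} {d : Fin n → ℕ}
    (σ : Matrix (∀ j, Fin (d j)) (∀ j, Fin (d j)) ℂ) : Prop :=
  ∃ (k : ℕ) (p : Fin k → ℝ) (φ : Fin k → (∀ j, Fin (d j)) → ℂ),
    (∀ i, 0 ≤ p i) ∧ ∑ i, p i = 1 ∧
    (∀ i, IsProdVec (φ i) ∧ IsUnitVec (φ i)) ∧
    σ = ∑ i, (p i : ℂ) • proj (φ i)

/-- Fidelity of separability. -/
def Fsep {n : ℕ} {d : Fin n → ℕ}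
    (ρ : Matrix (∀ j, Fin (d j)) (∀ j, Fin (d j)) ℂ) : ℝ :=
  sSup {x | ∃ σ, IsSepState σ ∧ x = fid ρ σ}

/-- Maximal overlap with product unit vectors. -/
def Lmax {n : ℕ} {d : Fin n → ℕ} (ψ : (∀ j, Fin (d j)) → ℂ) : ℝ :=
  sSup {x | ∃ φ, IsProdVec φ ∧ IsUnitVec φ ∧ x = ‖inn φ ψ‖}

section Helpers

variable {ι : Type*} [Fintype ι] [DecidableEq ι]

lemma proj_posSemidef (v : ι → ℂ) : (proj v).PosSemidef := by
  refine Matrix.PosSemidef.of_dotProduct_mulVec_nonneg ?_ ?_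
  · ext x y
    simp [proj, Matrix.conjTranspose_apply, mul_comm]
  · intro u
    have h : (proj v).mulVec u = (inn v u) • v := by
      ext x
      simp [proj, Matrix.mulVec, dotProduct, inn, Finset.mul_sum, mul_comm, mul_left_comm]
    rw [h]
    have : dotProduct (star u) ((inn v u) • v) = star (inn v u) * inn v u := by
      simp [dotProduct, inn, Finset.mul_sum, Finset.sum_mul, mul_comm, mul_left_comm]
      rw [Finset.sum_comm]
    rw [this]
    exact star_mul_self_nonneg _

open scoped MatrixOrder in
lemma psqrt_eq {A B : Matrix ι ι ℂ} (hB : B.PosSemidef) (hA : A.PosSemidef)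
    (h : B ^ 2 = A) : psqrt A = B := by
  rw [psqrt, dif_pos hA]
  have e1 : (hA.1.eigenvectorUnitary : Matrix ι ι ℂ) *
      Matrix.diagonal ((↑) ∘ (Real.sqrt ·) ∘ hA.1.eigenvalues) *
      (star hA.1.eigenvectorUnitary : Matrix ι ι ℂ) = cfc Real.sqrt A := by
    rw [hA.1.cfc_eq]; rfl
  rw [e1, ← cfcₙ_eq_cfc, ← CFC.sqrt_eq_real_sqrt A hA.nonneg]
  exact CFC.sqrt_unique (by rw [← h, pow_two]) hB.nonneg

lemma proj_mul_proj {ψ : ι → ℂ} (hψ : IsUnitVec ψ) : proj ψ * proj ψ = proj ψ := by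
  ext x y
  simp only [Matrix.mul_apply, proj]
  have : ∑ a, (ψ x * star (ψ a)) * (ψ a * star (ψ y)) = (inn ψ ψ) * (ψ x * star (ψ y)) := by
    simp [inn, Finset.sum_mul, Finset.mul_sum]; ring_nf
    exact Finset.sum_congr rfl fun a _ => by ring
  rw [this, hψ, one_mul]

lemma proj_mul_mul (ψ : ι → ℂ) (σ : Matrix ι ι ℂ) :
    proj ψ * σ * proj ψ = (inn ψ (σ.mulVec ψ)) • proj ψ := by
  ext x y
  simp only [Matrix.mul_apply, proj, Matrix.smul_apply, smul_eq_mul, inn, Matrix.mulVec,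
    dotProduct, Finset.mul_sum, Finset.sum_mul]
  rw [Finset.sum_comm]
  refine Finset.sum_congr rfl fun b _ => Finset.sum_congr rfl fun a _ => by ring

lemma mulVec_proj (v u : ι → ℂ) : (proj v).mulVec u = (inn v u) • v := by
  ext x
  simp [proj, Matrix.mulVec, dotProduct, inn, Finset.mul_sum, mul_comm, mul_left_comm]

lemma inn_sum {κ : Type*} [Fintype κ] (u : ι → ℂ) (f : κ → ι → ℂ) :
    inn u (∑ i, f i) = ∑ i, inn u (f i) := by
  simp only [inn, Finset.sum_apply, Finset.mul_sum]
  exact Finset.sum_comm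

lemma inn_smul (a : ℂ) (u v : ι → ℂ) : inn u (a • v) = a * inn u v := by
  simp only [inn, Pi.smul_apply, smul_eq_mul, Finset.mul_sum]
  exact Finset.sum_congr rfl fun x _ => by ring

lemma star_inn (u v : ι → ℂ) : star (inn u v) = inn v u := by
  simp [inn, mul_comm]

lemma proj_smul (a : ℂ) (ψ : ι → ℂ) : proj (a • ψ) = (a * star a) • proj ψ := by
  ext x y; simp [proj]; ring

lemma trace_proj (ψ : ι → ℂ) : (proj ψ).trace = inn ψ ψ := by
  simp [Matrix.trace, proj, inn, Matrix.diag, mul_comm]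

lemma fid_proj {ψ : ι → ℂ} (hψ : IsUnitVec ψ) (σ : Matrix ι ι ℂ) (c : ℝ) (hc : 0 ≤ c)
    (hσ : inn ψ (σ.mulVec ψ) = (c : ℂ)) : fid (proj ψ) σ = c := by
  have hP : (proj ψ).PosSemidef := proj_posSemidef ψ
  have hsq : proj ψ ^ 2 = proj ψ := by rw [pow_two, proj_mul_proj hψ]
  have h1 : psqrt (proj ψ) = proj ψ := psqrt_eq hP hP hsq
  set r := Real.sqrt c with hr
  have hrc : (r : ℂ) ^ 2 = (c : ℂ) := by
    rw [← Complex.ofReal_pow, Real.sq_sqrt hc]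
  have hB : proj ((Real.sqrt r : ℂ) • ψ) = (r : ℂ) • proj ψ := by
    rw [proj_smul]
    congr 1
    rw [Complex.star_def, Complex.conj_ofReal, ← Complex.ofReal_mul,
      Real.mul_self_sqrt (Real.sqrt_nonneg c)]
  have hB2 : ((r : ℂ) • proj ψ) ^ 2 = (c : ℂ) • proj ψ := by
    rw [pow_two, smul_mul_smul_comm, proj_mul_proj hψ, ← hrc, pow_two]
  have hBpsd : ((r : ℂ) • proj ψ).PosSemidef := hB ▸ proj_posSemidef _
  have hApsd : ((c : ℂ) • proj ψ).PosSemidef := hB2 ▸ hBpsd.pow 2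
  have h2 : psqrt (proj ψ * σ * proj ψ) = (r : ℂ) • proj ψ := by
    rw [proj_mul_mul, hσ]
    exact psqrt_eq hBpsd hApsd hB2
  rw [fid, h1, h2, Matrix.trace_smul, trace_proj, hψ]
  simp [hr, Real.sq_sqrt hc]

lemma inn_sep {ψ : ι → ℂ} {k : ℕ} (p : Fin k → ℝ) (φ : Fin k → ι → ℂ) :
    inn ψ ((∑ i, (p i : ℂ) • proj (φ i)).mulVec ψ)
      = ((∑ i, p i * ‖inn (φ i) ψ‖ ^ 2 : ℝ) : ℂ) := by
  have h1 : (∑ i, (p i : ℂ) • proj (φ i)).mulVec ψ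
      = ∑ i, (p i : ℂ) • ((proj (φ i)).mulVec ψ) := by
    ext x
    simp [Matrix.mulVec, dotProduct, Matrix.sum_apply, Finset.sum_mul, Finset.sum_apply]
    rw [Finset.sum_comm]
    refine Finset.sum_congr rfl fun y _ => ?_
    rw [Finset.mul_sum]
    exact Finset.sum_congr rfl fun a _ => by ring
  rw [h1, inn_sum]
  push_cast
  refine Finset.sum_congr rfl fun i _ => ?_
  rw [inn_smul, mulVec_proj, inn_smul, ← star_inn (φ i) ψ]
  rw [Complex.star_def, Complex.mul_conj, Complex.normSq_eq_norm_sq]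
  push_cast
  ring

def toE (u : ι → ℂ) : EuclideanSpace ℂ ι := WithLp.toLp 2 u

lemma inn_eq_inner (u v : ι → ℂ) : inn u v = inner ℂ (toE u) (toE v) := by
  simp [inn, toE, PiLp.inner_apply, RCLike.inner_apply, Complex.star_def, mul_comm]

lemma norm_toE_eq_one {u : ι → ℂ} (hu : IsUnitVec u) : ‖toE u‖ = 1 := by
  have h := inner_self_eq_norm_sq_to_K (𝕜 := ℂ) (toE u)
  rw [← inn_eq_inner, hu] at h
  have h2 : (1 : ℝ) = ‖toE u‖ ^ 2 := by
    have h3 : (1 : ℂ) = ((‖toE u‖ ^ 2 : ℝ) : ℂ) := by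
      rw [h]; norm_num [RCLike.ofReal_pow]
    exact_mod_cast h3
  nlinarith [norm_nonneg (toE u)]

/-- Cauchy–Schwarz for unit vectors. -/
lemma abs_inn_le_one {u v : ι → ℂ} (hu : IsUnitVec u) (hv : IsUnitVec v) :
    ‖inn u v‖ ≤ 1 := by
  have : ‖inn u v‖ = ‖(inner ℂ (toE u) (toE v) : ℂ)‖ := by
    rw [inn_eq_inner]
  rw [this]
  calc ‖(inner ℂ (toE u) (toE v) : ℂ)‖ ≤ ‖toE u‖ * ‖toE v‖ := norm_inner_le_norm _ _
    _ = 1 := by rw [norm_toE_eq_one hu, norm_toE_eq_one hv, mul_one]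

end Helpers

/-- for a pure state, the fidelity of separability is the squared maximal
overlap with product unit vectors, `F_sep(|ψ⟩⟨ψ|) = sup_φ |⟨φ,ψ⟩|² = Λ_max(ψ)²`. -/
theorem fsep_pure_eq_sq_max_overlap (n : ℕ) (hn : 1 ≤ n) (d : Fin n → ℕ)
    (ψ : (∀ j, Fin (d j)) → ℂ) (hψ : IsUnitVec ψ) :
    Fsep (proj ψ) =
      sSup {x | ∃ φ, IsProdVec φ ∧ IsUnitVec φ ∧ x = ‖inn φ ψ‖ ^ 2} ∧
    Fsep (proj ψ) = (Lmax ψ) ^ 2 := by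
  classical
  -- the index type is nonempty
  haveI : Nonempty (∀ j, Fin (d j)) := by
    by_contra h
    rw [not_nonempty_iff] at h
    have : inn ψ ψ = 0 := by simp [inn]
    rw [hψ] at this
    exact one_ne_zero this
  obtain ⟨x0⟩ := ‹Nonempty (∀ j, Fin (d j))›
  -- the canonical product unit vector
  set φ0 : (∀ j, Fin (d j)) → ℂ := fun x => if x = x0 then 1 else 0 with hφ0
  have hφ0prod : IsProdVec φ0 := by
    refine ⟨fun j a => if a = x0 j then 1 else 0, fun x => ?_⟩
    rw [Finset.prod_boole]
    simp only [hφ0, Finset.mem_univ, forall_true_left]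
    congr 1
    exact propext funext_iff
  have hφ0unit : IsUnitVec φ0 := by
    simp [IsUnitVec, inn, hφ0, apply_ite]
  set A := {x | ∃ σ, IsSepState σ ∧ x = fid (proj ψ) σ} with hA
  set B := {x | ∃ φ, IsProdVec φ ∧ IsUnitVec φ ∧ x = ‖inn φ ψ‖ ^ 2} with hB
  set L := {x | ∃ φ, IsProdVec φ ∧ IsUnitVec φ ∧ x = ‖inn φ ψ‖} with hL
  have hBne : B.Nonempty := ⟨_, ⟨φ0, hφ0prod, hφ0unit, rfl⟩⟩
  have hLne : L.Nonempty := ⟨_, ⟨φ0, hφ0prod, hφ0unit, rfl⟩⟩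
  have hBbdd : BddAbove B := by
    refine ⟨1, fun x hx => ?_⟩
    obtain ⟨φ, hp, hu, rfl⟩ := hx
    have h1 := abs_inn_le_one hu hψ
    nlinarith [norm_nonneg (inn φ ψ)]
  have hLbdd : BddAbove L := by
    refine ⟨1, fun x hx => ?_⟩
    obtain ⟨φ, hp, hu, rfl⟩ := hx
    exact abs_inn_le_one hu hψ
  -- B ⊆ A
  have hBsubA : B ⊆ A := by
    rintro x ⟨φ, hp, hu, rfl⟩
    refine ⟨∑ i : Fin 1, ((1 : ℝ) : ℂ) • proj φ, ⟨1, fun _ => 1, fun _ => φ, fun _ => zero_le_one,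
      by simp, fun _ => ⟨hp, hu⟩, rfl⟩, ?_⟩
    have := fid_proj hψ (∑ i : Fin 1, ((1 : ℝ) : ℂ) • proj φ)
      (∑ i : Fin 1, (1 : ℝ) * ‖inn φ ψ‖ ^ 2)
      (by positivity) (inn_sep (fun _ => (1 : ℝ)) (fun _ => φ))
    rw [this]
    simp
  -- every element of A is bounded by sSup B
  have hAle : ∀ a ∈ A, a ≤ sSup B := by
    rintro a ⟨σ, ⟨k, p, φ, hp0, hp1, hφ, rfl⟩, rfl⟩
    have hfid := fid_proj hψ _ (∑ i, p i * ‖inn (φ i) ψ‖ ^ 2)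
      (Finset.sum_nonneg fun i _ => mul_nonneg (hp0 i) (by positivity)) (inn_sep p φ)
    rw [hfid]
    calc ∑ i, p i * ‖inn (φ i) ψ‖ ^ 2
        ≤ ∑ i, p i * sSup B := by
          refine Finset.sum_le_sum fun i _ => mul_le_mul_of_nonneg_left ?_ (hp0 i)
          exact le_csSup hBbdd ⟨φ i, (hφ i).1, (hφ i).2, rfl⟩
      _ = sSup B := by rw [← Finset.sum_mul, hp1, one_mul]
  have hAne : A.Nonempty := hBne.mono hBsubA
  have hAbdd : BddAbove A := ⟨sSup B, hAle⟩
  have h1 : Fsep (proj ψ) = sSup B :=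
    le_antisymm (csSup_le hAne hAle) (csSup_le_csSup hAbdd hBne hBsubA)
  refine ⟨h1, ?_⟩
  rw [h1]
  -- sSup B = (sSup L)^2
  have hL0 : 0 ≤ sSup L :=
    le_trans (norm_nonneg _) (le_csSup hLbdd ⟨φ0, hφ0prod, hφ0unit, rfl⟩)
  have hB0 : 0 ≤ sSup B :=
    le_trans (by positivity) (le_csSup hBbdd ⟨φ0, hφ0prod, hφ0unit, rfl⟩)
  have hle : sSup B ≤ (sSup L) ^ 2 := by
    refine csSup_le hBne ?_
    rintro x ⟨φ, hp, hu, rfl⟩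
    have : ‖inn φ ψ‖ ≤ sSup L := le_csSup hLbdd ⟨φ, hp, hu, rfl⟩
    exact pow_le_pow_left₀ (norm_nonneg _) this 2
  have hge : (sSup L) ^ 2 ≤ sSup B := by
    have hsq : sSup L ≤ Real.sqrt (sSup B) := by
      refine csSup_le hLne ?_
      rintro x ⟨φ, hp, hu, rfl⟩
      rw [Real.le_sqrt (norm_nonneg _)]
      · exact le_csSup hBbdd ⟨φ, hp, hu, rfl⟩
      · exact hB0
    calc (sSup L) ^ 2 ≤ (Real.sqrt (sSup B)) ^ 2 := pow_le_pow_left₀ hL0 hsq 2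
      _ = sSup B := Real.sq_sqrt hB0
  exact le_antisymm hle hge
end
end

section
/- Let ρ be a density matrix on a finite-dimensional complex Hilbert space H with a fixed decomposition ρ = ∑_{i<k} p_i |ψ_i⟩⟨ψ_i|, where p_i ≥ 0, ∑_{i<k} p_i = 1, and the ψ_i are unit vectors in H. Let ψ be any purification of ρ with ancilla dimension d_0 ≥ k. Then there exists an orthonormal family (ψ_i^{(0)})_{i<k} in ℂ^{d_0} such that ψ = ∑_{i<k} √(p_i) · ψ_i^{(0)} ⊗ ψ_i. -/
open scoped BigOperators InnerProductSpace
open Matrix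

noncomputable section

private lemma gram_dot {d : ℕ} {ι : Type} [Fintype ι] (M : Matrix (Fin d) ι ℂ) (v : ι → ℂ) :
    star (M *ᵥ v) ⬝ᵥ (M *ᵥ v) = star v ⬝ᵥ ((Mᴴ * M) *ᵥ v) := by
  rw [Matrix.star_mulVec, Matrix.dotProduct_mulVec, Matrix.dotProduct_mulVec, Matrix.vecMul_vecMul]

lemma key {d : ℕ} {ι : Type} [Fintype ι] [DecidableEq ι]
    (M N : Matrix (Fin d) ι ℂ) (h : Mᴴ * M = Nᴴ * N) :
    ∃ U : Matrix (Fin d) (Fin d) ℂ, Uᴴ * U = 1 ∧ M = U * N := by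
  set f : EuclideanSpace ℂ ι →ₗ[ℂ] EuclideanSpace ℂ (Fin d) := Matrix.toEuclideanLin M with hf
  set g : EuclideanSpace ℂ ι →ₗ[ℂ] EuclideanSpace ℂ (Fin d) := Matrix.toEuclideanLin N with hg
  have hinner : ∀ v : EuclideanSpace ℂ ι, ⟪f v, f v⟫_ℂ = ⟪g v, g v⟫_ℂ := by
    intro v
    have h1 := gram_dot M (WithLp.equiv 2 _ v)
    have h2 := gram_dot N (WithLp.equiv 2 _ v)
    rw [h] at h1
    simp only [PiLp.inner_apply, RCLike.inner_apply, hf, hg, Matrix.toEuclideanLin_apply,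
      dotProduct, Pi.star_apply, WithLp.equiv_symm_apply, WithLp.equiv_apply, starRingEnd_apply] at *
    simp only [mul_comm (star _)] at h1 h2
    rw [h1, ← h2]
  have hnorm : ∀ v : EuclideanSpace ℂ ι, ‖f v‖ = ‖g v‖ := by
    intro v
    have h1 := hinner v
    rw [inner_self_eq_norm_sq_to_K, inner_self_eq_norm_sq_to_K] at h1
    have h2 : ‖f v‖ ^ 2 = ‖g v‖ ^ 2 := by exact_mod_cast h1
    nlinarith [norm_nonneg (f v), norm_nonneg (g v)]
  have hker : LinearMap.ker g ≤ LinearMap.ker f := by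
    intro v hv
    rw [LinearMap.mem_ker] at *
    have h1 := hnorm v
    rw [hv, norm_zero] at h1
    exact norm_eq_zero.mp h1
  let L0 : LinearMap.range g →ₗ[ℂ] EuclideanSpace ℂ (Fin d) :=
    ((LinearMap.ker g).liftQ f hker) ∘ₗ g.quotKerEquivRange.symm.toLinearMap
  have hL0 : ∀ v (h : g v ∈ LinearMap.range g), L0 ⟨g v, h⟩ = f v := by
    intro v h
    simp only [L0, LinearMap.comp_apply, LinearEquiv.coe_coe,
      LinearMap.quotKerEquivRange_symm_apply_image, Submodule.mkQ_apply, Submodule.liftQ_apply]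
  have hL0norm : ∀ s : LinearMap.range g, ‖L0 s‖ = ‖s‖ := by
    rintro ⟨s, v, rfl⟩
    exact (congrArg norm (hL0 v _)).trans (hnorm v)
  let Liso : LinearMap.range g →ₗᵢ[ℂ] EuclideanSpace ℂ (Fin d) := ⟨L0, hL0norm⟩
  let L := Liso.extend
  let U : Matrix (Fin d) (Fin d) ℂ := Matrix.toEuclideanLin.symm L.toLinearMap
  have hUL : Matrix.toEuclideanLin U = L.toLinearMap := Matrix.toEuclideanLin.apply_symm_apply _
  have hMUN : ∀ v : EuclideanSpace ℂ ι, f v = L (g v) := by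
    intro v
    have h1 : L (g v) = Liso ⟨g v, LinearMap.mem_range_self g v⟩ :=
      Liso.extend_apply ⟨g v, LinearMap.mem_range_self g v⟩
    rw [h1]
    exact (hL0 v _).symm
  refine ⟨U, ?_, ?_⟩
  · ext i j
    have h1 : ∀ w : EuclideanSpace ℂ (Fin d), ⟪L w, L w⟫_ℂ = 0 → True := fun _ _ => trivial
    have h2 := L.inner_map_map (EuclideanSpace.single i (1:ℂ)) (EuclideanSpace.single j (1:ℂ))
    have h3 : ∀ w : EuclideanSpace ℂ (Fin d), L w = U *ᵥ w := by
      intro w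
      have h4 : Matrix.toEuclideanLin U w = L w := by rw [hUL]; rfl
      rw [← h4]
      rfl
    simp only [PiLp.inner_apply] at h2
    rw [h3, h3] at h2
    simp only [PiLp.inner_apply, RCLike.inner_apply, EuclideanSpace.single_apply,
      Matrix.mulVec, dotProduct, mul_ite, mul_one, mul_zero, Finset.sum_ite_eq',
      Finset.mem_univ, if_true, starRingEnd_apply] at h2
    rw [Matrix.mul_apply, Matrix.one_apply]
    simp only [Matrix.conjTranspose_apply]
    simp only [mul_comm (star _)]
    rw [h2]
    simp [eq_comm]
  · have hf' : ∀ v : ι → ℂ, f ((WithLp.equiv 2 (ι → ℂ)).symm v) = M *ᵥ v := by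
      intro v; rw [hf, Matrix.toEuclideanLin_apply]; rfl
    have hg' : ∀ v : ι → ℂ, g ((WithLp.equiv 2 (ι → ℂ)).symm v) = N *ᵥ v := by
      intro v; rw [hg, Matrix.toEuclideanLin_apply]; rfl
    have h3 : ∀ w : EuclideanSpace ℂ (Fin d), L w = U *ᵥ w := by
      intro w
      have h4 : Matrix.toEuclideanLin U w = L w := by rw [hUL]; rfl
      rw [← h4]
      rfl
    ext a x
    have h6 := congrArg WithLp.ofLp (hMUN ((WithLp.equiv 2 (ι → ℂ)).symm (Pi.single x 1)))
    rw [hf', h3, hg'] at h6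
    have h7 : (M *ᵥ Pi.single x 1 : Fin d → ℂ) = U *ᵥ (N *ᵥ Pi.single x 1) := h6
    have h8 := congrFun h7 a
    simpa [Matrix.mulVec, dotProduct, Pi.single_apply, mul_ite, Matrix.mul_apply,
      Finset.mul_sum] using h8

lemma sum_castLE {k d : ℕ} (hk : k ≤ d) (f : Fin k → ℂ) :
    ∑ a : Fin d, (if h : (a : ℕ) < k then f ⟨a, h⟩ else 0) = ∑ i, f i := by
  have hsub : (Finset.univ.map (Fin.castLEEmb hk)) ⊆ (Finset.univ : Finset (Fin d)) :=
    Finset.subset_univ _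
  have hzero : ∀ a ∈ (Finset.univ : Finset (Fin d)),
      a ∉ Finset.univ.map (Fin.castLEEmb hk) →
      (if h : (a : ℕ) < k then f ⟨a, h⟩ else 0) = 0 := by
    intro a _ ha
    rw [dif_neg]
    intro h
    exact ha (Finset.mem_map.mpr ⟨⟨(a : ℕ), h⟩, Finset.mem_univ _, by
      simp [Fin.castLEEmb, Fin.castLE]⟩)
  rw [← Finset.sum_subset hsub hzero, Finset.sum_map]
  apply Finset.sum_congr rfl
  intro i _
  have hi : ((Fin.castLEEmb hk i : Fin d) : ℕ) < k := by
    simp [Fin.castLEEmb, Fin.castLE]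
  rw [dif_pos hi]
  have he : (⟨((Fin.castLEEmb hk i : Fin d) : ℕ), hi⟩ : Fin k) = i := by
    apply Fin.ext
    simp [Fin.castLEEmb, Fin.castLE]
  rw [he]

/-- every purification `ψ` (with ancilla dimension `d0 ≥ k`) of
`ρ = ∑ i, p i • |ψs i⟩⟨ψs i|` can be written as `ψ = ∑ i, √(p i) • w i ⊗ ψs i`
with an orthonormal family `w` of ancilla vectors. -/
theorem purification_of_decomposition (ι : Type) [Fintype ι] [DecidableEq ι]
    (ρ : Matrix ι ι ℂ) (k d0 : ℕ) (hk : k ≤ d0)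
    (p : Fin k → ℝ) (hp : ∀ i, 0 ≤ p i) (hp1 : ∑ i, p i = 1)
    (ψs : Fin k → ι → ℂ) (hψs : ∀ i, inn (ψs i) (ψs i) = 1)
    (hρ : ρ = ∑ i, (p i : ℂ) • proj (ψs i))
    (ψ : Fin d0 × ι → ℂ) (hψ : inn ψ ψ = 1)
    (hpur : ∀ x y, ∑ a, ψ (a, x) * star (ψ (a, y)) = ρ x y) :
    ∃ w : Fin k → Fin d0 → ℂ,
      (∀ i j, inn (w i) (w j) = if i = j then 1 else 0) ∧
      ∀ a x, ψ (a, x) = ∑ i, (Real.sqrt (p i) : ℂ) * w i a * ψs i x := by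
  classical
  set M : Matrix (Fin d0) ι ℂ := fun a x => ψ (a, x) with hM
  set N : Matrix (Fin d0) ι ℂ := fun a x =>
    if h : (a : ℕ) < k then (Real.sqrt (p ⟨a, h⟩) : ℂ) * ψs ⟨a, h⟩ x else 0 with hN
  have hMN : Mᴴ * M = Nᴴ * N := by
    ext x y
    rw [Matrix.mul_apply, Matrix.mul_apply]
    have hL : ∑ a, star (M a x) * M a y = star (ρ x y) := by
      rw [← hpur x y, star_sum]
      apply Finset.sum_congr rfl
      intro a _
      simp [hM, star_mul', mul_comm]
    have hR : ∑ a, star (N a x) * N a y = star (ρ x y) := by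
      have hterm : ∀ a : Fin d0, star (N a x) * N a y =
          (if h : (a : ℕ) < k then
            ((p ⟨a, h⟩ : ℂ)) * (star (ψs ⟨a, h⟩ x) * ψs ⟨a, h⟩ y) else 0) := by
        intro a
        by_cases h : (a : ℕ) < k
        · rw [hN]
          simp only [dif_pos h]
          rw [star_mul']
          rw [show star ((Real.sqrt (p ⟨a, h⟩) : ℂ)) = (Real.sqrt (p ⟨a, h⟩) : ℂ) from
            Complex.conj_ofReal _]
          have : ((Real.sqrt (p ⟨a, h⟩) : ℂ)) * ((Real.sqrt (p ⟨a, h⟩) : ℂ)) = (p ⟨a, h⟩ : ℂ) := by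
            rw [← Complex.ofReal_mul, Real.mul_self_sqrt (hp _)]
          calc (Real.sqrt (p ⟨a, h⟩) : ℂ) * star (ψs ⟨a, h⟩ x) *
                ((Real.sqrt (p ⟨a, h⟩) : ℂ) * ψs ⟨a, h⟩ y)
              = ((Real.sqrt (p ⟨a, h⟩) : ℂ) * (Real.sqrt (p ⟨a, h⟩) : ℂ)) *
                (star (ψs ⟨a, h⟩ x) * ψs ⟨a, h⟩ y) := by ring
            _ = _ := by rw [this]
        · simp [hN, dif_neg h]
      rw [Finset.sum_congr rfl (fun a _ => hterm a),
        sum_castLE hk (fun i => ((p i : ℂ)) * (star (ψs i x) * ψs i y))]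
      rw [hρ]
      simp only [Matrix.sum_apply, Matrix.smul_apply, proj, star_sum, smul_eq_mul, star_mul',
        Complex.conj_ofReal]
      apply Finset.sum_congr rfl
      intro i _
      ring_nf
      simp [mul_comm, mul_assoc, mul_left_comm]
    simp only [Matrix.conjTranspose_apply]
    rw [hL, hR]
  obtain ⟨U, hU1, hU2⟩ := key M N hMN
  refine ⟨fun i a => U a (Fin.castLE hk i), ?_, ?_⟩
  · intro i j
    have h1 := Matrix.ext_iff.mpr hU1 (Fin.castLE hk i) (Fin.castLE hk j)
    rw [Matrix.mul_apply, Matrix.one_apply] at h1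
    simp only [Matrix.conjTranspose_apply] at h1
    rw [inn]
    rw [h1]
    simp [Fin.castLE_inj]
  · intro a x
    have h2 := Matrix.ext_iff.mpr hU2 a x
    rw [Matrix.mul_apply] at h2
    have h3 : ∀ b : Fin d0, U a b * N b x =
        (if h : (b : ℕ) < k then
          (Real.sqrt (p ⟨b, h⟩) : ℂ) * U a (Fin.castLE hk ⟨(b : ℕ), h⟩) * ψs ⟨b, h⟩ x else 0) := by
      intro b
      by_cases h : (b : ℕ) < k
      · rw [hN]
        simp only [dif_pos h]
        have : Fin.castLE hk ⟨(b : ℕ), h⟩ = b := by apply Fin.ext; simp [Fin.castLE]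
        rw [this]
        ring
      · simp [hN, dif_neg h]
    rw [Finset.sum_congr rfl (fun b _ => h3 b),
      sum_castLE hk (fun i => (Real.sqrt (p i) : ℂ) * U a (Fin.castLE hk i) * ψs i x)] at h2
    exact h2
end
end
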